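/- Let S ⊆ ℝ^8 be the union of J̃'(7,2) = {e_i + e_j : 1 ≤ i < j ≤ 7}, the single vector ((1/2)^7, −3/2) (first seven coordinates 1/2, last coordinate −3/2), and the 7 vectors having six of the first seven coordinates equal to 1/2, one of the first seven coordinates equal to −1/2, and last coordinate −1/2. Then S has exactly 29 points, S is a two-distance set in the hyperplane H = {x ∈ ℝ^8 : x_1 + ⋯ + x_8 = 2} with distances √2 and 2, and S is maximal: no point y ∈ H \ S can be added to S while keeping it a two-distance set. -/

import Mathlib

noncomputable section

/-- The set of distances between distinct points of `S`. -/
def distSet {n : ℕ} (S : Set (EuclideanSpace ℝ (Fin n))) : Set ℝ :=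
  {d | ∃ x ∈ S, ∃ y ∈ S, x ≠ y ∧ d = dist x y}

/-- `S` is an `s`-distance set: exactly `s` distances occur between distinct points. -/
def IsSDistanceSet {n : ℕ} (s : ℕ) (S : Set (EuclideanSpace ℝ (Fin n))) : Prop :=
  (distSet S).Finite ∧ (distSet S).ncard = s

/-- The representation `J̃'(n-1,2) = {eᵢ + eⱼ : 1 ≤ i < j ≤ n-1}` of the Johnson graph
`J(n-1,2)` inside `ℝⁿ` (0-based: indices `< n-1`, i.e. all but the last coordinate). -/
def JohnsonRep' (n : ℕ) : Set (EuclideanSpace ℝ (Fin n)) :=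
  {x | ∃ i j : Fin n, (i : ℕ) < (j : ℕ) ∧ (j : ℕ) < n - 1 ∧
    x = EuclideanSpace.single i 1 + EuclideanSpace.single j 1}

/-- The hyperplane `H = {x ∈ ℝⁿ : ∑ xᵢ = 2}`. -/
def Hyp2 (n : ℕ) : Set (EuclideanSpace ℝ (Fin n)) :=
  {x | ∑ i, x i = (2 : ℝ)}

/-- The single vector `((1/2)^7, -3/2) ∈ ℝ⁸`. -/
def V0eight : Set (EuclideanSpace ℝ (Fin 8)) :=
  {x | (∀ i : Fin 8, (i : ℕ) < 7 → x i = 1/2) ∧ (∀ i : Fin 8, (i : ℕ) = 7 → x i = -3/2)}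

/-- The 7 vectors `((1/2)^6, -1/2, -1/2)^{P'} ∈ ℝ⁸`: six of the first seven coordinates
equal `1/2`, one of the first seven equals `-1/2`, and the last equals `-1/2`. -/
def Weight : Set (EuclideanSpace ℝ (Fin 8)) :=
  {x | {i : Fin 8 | (i : ℕ) < 7 ∧ x i = 1/2}.ncard = 6 ∧
    {i : Fin 8 | (i : ℕ) < 7 ∧ x i = -1/2}.ncard = 1 ∧
    (∀ i : Fin 8, (i : ℕ) = 7 → x i = -1/2)}

-- index type
abbrev I29 := ({p : Fin 7 × Fin 7 // p.1 < p.2}) ⊕ (Unit ⊕ Fin 7)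
instance : Fintype I29 := by unfold I29; infer_instance
instance : DecidableEq I29 := by unfold I29; infer_instance

def ptZ : I29 → Fin 8 → ℤ
  | Sum.inl p => fun m => (if m = Fin.castSucc p.1.1 then 2 else 0) + (if m = Fin.castSucc p.1.2 then 2 else 0)
  | Sum.inr (Sum.inl _) => fun m => if (m : ℕ) = 7 then -3 else 1
  | Sum.inr (Sum.inr k) => fun m => if (m : ℕ) = 7 ∨ m = Fin.castSucc k then -1 else 1

def ptR (a : I29) : EuclideanSpace ℝ (Fin 8) := WithLp.toLp 2 (fun m => (ptZ a m : ℝ)/2)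

lemma ptR_apply (a : I29) (m : Fin 8) : ptR a m = (ptZ a m : ℝ)/2 := rfl

lemma ptZ_inj : Function.Injective ptZ := by decide

lemma ptR_inj : Function.Injective ptR := by
  intro a b h
  apply ptZ_inj
  funext m
  have := congrArg (fun v => v m) h
  rw [ptR_apply, ptR_apply] at this
  have h2 : (ptZ a m : ℝ) = ptZ b m := by linarith
  exact_mod_cast h2

lemma hJ_eq : JohnsonRep' 8 = ptR '' (Set.range Sum.inl) := by
  ext x
  constructor
  · rintro ⟨i, j, hij, hj7, rfl⟩
    have hi7 : (i : ℕ) < 7 := lt_trans hij hj7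
    refine ⟨Sum.inl ⟨(⟨i, hi7⟩, ⟨j, hj7⟩), Fin.mk_lt_mk.mpr hij⟩, ⟨_, rfl⟩, ?_⟩
    have h1 : Fin.castSucc (⟨(i:ℕ), hi7⟩ : Fin 7) = i := by simp [Fin.ext_iff]
    have h2 : Fin.castSucc (⟨(j:ℕ), hj7⟩ : Fin 7) = j := by simp [Fin.ext_iff]
    ext m
    rw [ptR_apply]
    simp only [ptZ, h1, h2, PiLp.add_apply, EuclideanSpace.single_apply]
    push_cast
    split_ifs <;> norm_num
  · rintro ⟨a, ⟨p, rfl⟩, rfl⟩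
    have hp := p.2
    rw [Fin.lt_def] at hp
    refine ⟨Fin.castSucc p.1.1, Fin.castSucc p.1.2, by simpa using hp,
      by simpa using p.1.2.isLt, ?_⟩
    ext m
    rw [ptR_apply]
    simp only [ptZ, PiLp.add_apply, EuclideanSpace.single_apply]
    push_cast
    split_ifs <;> norm_num

lemma hV_eq : V0eight = {ptR (Sum.inr (Sum.inl ()))} := by
  ext x
  simp only [V0eight, Set.mem_setOf_eq, Set.mem_singleton_iff]
  constructor
  · rintro ⟨h1, h2⟩
    ext m
    rw [ptR_apply]
    rcases Nat.lt_or_ge (m : ℕ) 7 with h | h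
    · rw [h1 m h]; simp only [ptZ]; rw [if_neg (by omega)]; norm_num
    · have : (m : ℕ) = 7 := by omega
      rw [h2 m this]; simp only [ptZ]; rw [if_pos this]; norm_num
  · rintro rfl
    constructor
    · intro i hi; rw [ptR_apply]; simp only [ptZ]; rw [if_neg (by omega)]; norm_num
    · intro i hi; rw [ptR_apply]; simp only [ptZ]; rw [if_pos hi]; norm_num

lemma wR_apply_lt (k : Fin 7) (m : Fin 8) (hm : (m:ℕ) < 7) :
    ptR (Sum.inr (Sum.inr k)) m = if m = Fin.castSucc k then -(1/2) else 1/2 := by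
  rw [ptR_apply]; simp only [ptZ]
  by_cases h : m = Fin.castSucc k
  · rw [if_pos (Or.inr h), if_pos h]; norm_num
  · rw [if_neg (by push_neg; exact ⟨by omega, h⟩), if_neg h]
    norm_num

lemma wR_apply_last (k : Fin 7) (m : Fin 8) (hm : (m:ℕ) = 7) :
    ptR (Sum.inr (Sum.inr k)) m = -(1/2) := by
  rw [ptR_apply]; simp only [ptZ]; rw [if_pos (Or.inl hm)]; norm_num

lemma card_ne_k (k : Fin 7) :
    (Finset.filter (fun i : Fin 8 => (i:ℕ) < 7 ∧ i ≠ Fin.castSucc k) Finset.univ).card = 6 := by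
  revert k; decide

lemma hW_eq : Weight = ptR '' (Set.range (fun k : Fin 7 => Sum.inr (Sum.inr k))) := by
  ext x
  constructor
  · rintro ⟨hA, hB, h7⟩
    obtain ⟨k0, hk0⟩ := Set.ncard_eq_one.mp hB
    have hk0mem : (k0:ℕ) < 7 ∧ x k0 = -1/2 := by
      have : k0 ∈ {i : Fin 8 | (i : ℕ) < 7 ∧ x i = -1/2} := by rw [hk0]; rfl
      exact this
    set A := {i : Fin 8 | (i : ℕ) < 7 ∧ x i = 1/2} with hAdef
    set B := {i : Fin 8 | (i : ℕ) < 7 ∧ x i = -1/2} with hBdef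
    set F := {i : Fin 8 | (i : ℕ) < 7} with hFdef
    have hAF : A ∪ B ⊆ F := by rintro i (hi | hi) <;> exact hi.1
    have hFfin : F.Finite := Set.toFinite _
    have hdisj : Disjoint A B := by
      rw [Set.disjoint_left]
      rintro i ⟨_, h1⟩ ⟨_, h2⟩
      rw [h1] at h2; norm_num at h2
    have hFeq : F = ↑(Finset.filter (fun i : Fin 8 => (i:ℕ) < 7) Finset.univ) := by
      ext i; simp [hFdef]
    have hFcard : F.ncard = 7 := by rw [hFeq, Set.ncard_coe_finset]; decide
    have hU : (A ∪ B).ncard = 7 := by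
      rw [Set.ncard_union_eq hdisj (Set.toFinite _) (Set.toFinite _), hA, hB]
    have hUF : A ∪ B = F := Set.eq_of_subset_of_ncard_le hAF (by omega) hFfin
    have hother : ∀ i : Fin 8, (i:ℕ) < 7 → i ≠ k0 → x i = 1/2 := by
      intro i hi hne
      have : i ∈ A ∪ B := by rw [hUF]; exact hi
      rcases this with h | h
      · exact h.2
      · exfalso; apply hne; have := hk0 ▸ h; exact this
    refine ⟨Sum.inr (Sum.inr ⟨(k0:ℕ), hk0mem.1⟩), ⟨_, rfl⟩, ?_⟩
    have hcs : Fin.castSucc (⟨(k0:ℕ), hk0mem.1⟩ : Fin 7) = k0 := by simp [Fin.ext_iff]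
    ext m
    rcases Nat.lt_or_ge (m : ℕ) 7 with h | h
    · rw [wR_apply_lt _ _ h, hcs]
      by_cases hmk : m = k0
      · rw [if_pos hmk, hmk, hk0mem.2]; norm_num
      · rw [if_neg hmk]; exact (hother m h hmk).symm
    · rw [wR_apply_last _ _ (by omega), h7 m (by omega)]; norm_num
  · rintro ⟨a, ⟨k, rfl⟩, rfl⟩
    refine ⟨?_, ?_, ?_⟩
    · have : {i : Fin 8 | (i : ℕ) < 7 ∧ ptR (Sum.inr (Sum.inr k)) i = 1/2} =
        ↑(Finset.filter (fun i : Fin 8 => (i:ℕ) < 7 ∧ i ≠ Fin.castSucc k) Finset.univ) := by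
        ext i
        simp only [Set.mem_setOf_eq, Finset.coe_filter, Finset.mem_univ, true_and]
        constructor
        · rintro ⟨h1, h2⟩
          refine ⟨h1, ?_⟩
          intro hik
          rw [wR_apply_lt _ _ h1, if_pos hik] at h2; norm_num at h2
        · rintro ⟨h1, h2⟩
          refine ⟨h1, ?_⟩
          rw [wR_apply_lt _ _ h1, if_neg h2]
      rw [this, Set.ncard_coe_finset, card_ne_k]
    · have : {i : Fin 8 | (i : ℕ) < 7 ∧ ptR (Sum.inr (Sum.inr k)) i = -1/2} =
        {Fin.castSucc k} := by
        ext i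
        simp only [Set.mem_setOf_eq, Set.mem_singleton_iff]
        constructor
        · rintro ⟨h1, h2⟩
          by_contra hik
          rw [wR_apply_lt _ _ h1, if_neg hik] at h2; norm_num at h2
        · rintro rfl
          refine ⟨by simpa using k.isLt, ?_⟩
          rw [wR_apply_lt _ _ (by simpa using k.isLt), if_pos rfl]; norm_num
      rw [this, Set.ncard_singleton]
    · intro i hi
      rw [wR_apply_last _ _ hi]; norm_num

lemma hS_eq : JohnsonRep' 8 ∪ V0eight ∪ Weight = Set.range ptR := by
  rw [hJ_eq, hV_eq, hW_eq]
  ext x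
  constructor
  · rintro ((⟨a, _, rfl⟩ | rfl) | ⟨a, _, rfl⟩) <;> exact Set.mem_range_self _
  · rintro ⟨a, rfl⟩
    rcases a with p | u | k
    · exact Or.inl (Or.inl ⟨Sum.inl p, Set.mem_range_self _, rfl⟩)
    · exact Or.inl (Or.inr rfl)
    · exact Or.inr ⟨Sum.inr (Sum.inr k), Set.mem_range_self _, rfl⟩

lemma card_S : (JohnsonRep' 8 ∪ V0eight ∪ Weight).ncard = 29 := by
  classical
  rw [hS_eq]
  have : Set.range ptR = ↑(Finset.univ.image ptR) := by
    rw [Finset.coe_image, Finset.coe_univ, Set.image_univ]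
  rw [this, Set.ncard_coe_finset, Finset.card_image_of_injective _ ptR_inj,
    Finset.card_univ]
  decide

lemma sumZ_pt : ∀ a : I29, ∑ m, ptZ a m = 4 := by decide

lemma S_subset_Hyp : JohnsonRep' 8 ∪ V0eight ∪ Weight ⊆ Hyp2 8 := by
  rw [hS_eq]
  rintro x ⟨a, rfl⟩
  show (∑ m, ptR a m) = 2
  have h1 : ∀ m : Fin 8, ptR a m = (ptZ a m : ℝ)/2 := fun m => rfl
  calc (∑ m, ptR a m) = ∑ m, (ptZ a m : ℝ)/2 := Finset.sum_congr rfl (fun m _ => rfl)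
    _ = (∑ m, (ptZ a m : ℝ))/2 := by rw [Finset.sum_div]
    _ = ((∑ m, ptZ a m : ℤ) : ℝ)/2 := by push_cast; ring
    _ = 2 := by rw [sumZ_pt]; norm_num

lemma d2Z : ∀ a b : I29, a ≠ b →
    (∑ m, (ptZ a m - ptZ b m)^2 = 8 ∨ ∑ m, (ptZ a m - ptZ b m)^2 = 16) := by decide

lemma dist_sq (x y : EuclideanSpace ℝ (Fin 8)) :
    dist x y = Real.sqrt (∑ m, (x m - y m)^2) := by
  rw [EuclideanSpace.dist_eq]
  congr 1
  exact Finset.sum_congr rfl (fun m _ => by rw [Real.dist_eq, sq_abs])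

lemma d2R (a b : I29) :
    (∑ m, (ptR a m - ptR b m)^2) = ((∑ m, (ptZ a m - ptZ b m)^2 : ℤ) : ℝ)/4 := by
  push_cast
  rw [Finset.sum_div]
  refine Finset.sum_congr rfl (fun m _ => ?_)
  rw [ptR_apply, ptR_apply]
  ring

lemma dist_ptR {a b : I29} (h : a ≠ b) :
    dist (ptR a) (ptR b) = Real.sqrt 2 ∨ dist (ptR a) (ptR b) = 2 := by
  rw [dist_sq, d2R]
  rcases d2Z a b h with h8 | h16
  · left; rw [h8]; norm_num
  · right; rw [h16]; norm_num

lemma sqrt2_ne_two : Real.sqrt 2 ≠ 2 := by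
  intro h
  have h2 := Real.sq_sqrt (by norm_num : (0:ℝ) ≤ 2)
  rw [h] at h2; norm_num at h2

lemma dS_sub : distSet (JohnsonRep' 8 ∪ V0eight ∪ Weight) ⊆ {Real.sqrt 2, 2} := by
  rintro d ⟨x, hx, y, hy, hxy, rfl⟩
  rw [hS_eq] at hx hy
  obtain ⟨a, rfl⟩ := hx
  obtain ⟨b, rfl⟩ := hy
  have hab : a ≠ b := fun h => hxy (by rw [h])
  rcases dist_ptR hab with h | h <;> simp [h]

lemma pair_dist {a b : I29} (h8 : ∑ m, (ptZ a m - ptZ b m)^2 = 8) :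
    dist (ptR a) (ptR b) = Real.sqrt 2 := by
  rw [dist_sq, d2R, h8]; norm_num

lemma pair_dist' {a b : I29} (h16 : ∑ m, (ptZ a m - ptZ b m)^2 = 16) :
    dist (ptR a) (ptR b) = 2 := by
  rw [dist_sq, d2R, h16]; norm_num

def pa : I29 := Sum.inl ⟨(0,1), by decide⟩
def pb : I29 := Sum.inl ⟨(0,2), by decide⟩
def pc : I29 := Sum.inl ⟨(2,3), by decide⟩

lemma dS_eq : distSet (JohnsonRep' 8 ∪ V0eight ∪ Weight) = {Real.sqrt 2, 2} := by
  apply Set.Subset.antisymm dS_sub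
  have hmem : ∀ a : I29, ptR a ∈ JohnsonRep' 8 ∪ V0eight ∪ Weight := by
    intro a; rw [hS_eq]; exact Set.mem_range_self _
  rintro d (rfl | rfl)
  · refine ⟨ptR pa, hmem pa, ptR pb, hmem pb, ?_, (pair_dist (by decide)).symm⟩
    intro h; exact absurd (ptR_inj h) (by decide)
  · refine ⟨ptR pa, hmem pa, ptR pc, hmem pc, ?_, (pair_dist' (by decide)).symm⟩
    intro h; exact absurd (ptR_inj h) (by decide)

lemma isSDS : IsSDistanceSet 2 (JohnsonRep' 8 ∪ V0eight ∪ Weight) := by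
  rw [IsSDistanceSet, dS_eq]
  exact ⟨Set.toFinite _, Set.ncard_pair sqrt2_ne_two⟩

lemma swC {t u v : ℝ} (h : 2*(u+v) = t ∨ 2*(u+v) = t-2) :
    2*(v+u) = t ∨ 2*(v+u) = t-2 := by
  rcases h with h|h
  · left; linarith
  · right; linarith

lemma tripleEq (t u v w : ℝ) (h1 : 2*(u+v) = t ∨ 2*(u+v) = t-2)
    (h2 : 2*(u+w) = t ∨ 2*(u+w) = t-2) (h3 : 2*(v+w) = t ∨ 2*(v+w) = t-2) :
    u = v ∨ u = w ∨ v = w := by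
  rcases h1 with h1|h1 <;> rcases h2 with h2|h2 <;> rcases h3 with h3|h3 <;>
    first | (left; linarith) | (right; left; linarith) | (right; right; linarith)

lemma Lne (t a x z : ℝ) (haa : 2*(a+a) = t ∨ 2*(a+a) = t-2)
    (hx : 2*(a+x) = t ∨ 2*(a+x) = t-2) (hz : 2*(a+z) = t ∨ 2*(a+z) = t-2)
    (hxz : 2*(x+z) = t ∨ 2*(x+z) = t-2) : x = a ∨ z = a := by
  rcases haa with h1|h1 <;> rcases hx with h2|h2 <;> rcases hz with h3|h3 <;>
    rcases hxz with h4|h4 <;> first | (left; linarith) | (right; linarith)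

lemma finalLemma (t a b y7 : ℝ) (hsum : 6*a + b + y7 = 2) (ht : t = 6*a^2 + b^2 + y7^2)
    (h3 : 2*(a+a) = t ∨ 2*(a+a) = t-2) (h4 : 2*(a+b) = t ∨ 2*(a+b) = t-2)
    (h5 : 4*y7 = -t ∨ 4*y7 = 2-t) (hW : 2*(b+y7) = 2-t ∨ 2*(b+y7) = 4-t) : False := by
  rcases h3 with h3|h3 <;> rcases h4 with h4|h4 <;> rcases h5 with h5|h5 <;>
    rcases hW with hW|hW <;>
    first
      | linarith
      | (have ha : a = 1/4 := by linarith
         have hb : b = 1/4 := by linarith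
         have hy : y7 = 1/4 := by linarith
         rw [ha, hb, hy] at ht; linarith)
      | (have ha : a = 1/4 := by linarith
         have hb : b = 5/4 := by linarith
         have hy : y7 = -3/4 := by linarith
         rw [ha, hb, hy] at ht; linarith)



lemma structure7 (t y0 y1 y2 y3 y4 y5 y6 : ℝ)
    (c01 : 2*(y0+y1) = t ∨ 2*(y0+y1) = t-2) (c02 : 2*(y0+y2) = t ∨ 2*(y0+y2) = t-2) (c03 : 2*(y0+y3) = t ∨ 2*(y0+y3) = t-2) (c04 : 2*(y0+y4) = t ∨ 2*(y0+y4) = t-2) (c05 : 2*(y0+y5) = t ∨ 2*(y0+y5) = t-2) (c06 : 2*(y0+y6) = t ∨ 2*(y0+y6) = t-2) (c12 : 2*(y1+y2) = t ∨ 2*(y1+y2) = t-2) (c13 : 2*(y1+y3) = t ∨ 2*(y1+y3) = t-2) (c14 : 2*(y1+y4) = t ∨ 2*(y1+y4) = t-2) (c15 : 2*(y1+y5) = t ∨ 2*(y1+y5) = t-2) (c16 : 2*(y1+y6) = t ∨ 2*(y1+y6) = t-2) (c23 : 2*(y2+y3) = t ∨ 2*(y2+y3) = t-2) (c24 : 2*(y2+y4)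 = t ∨ 2*(y2+y4) = t-2) (c25 : 2*(y2+y5) = t ∨ 2*(y2+y5) = t-2) (c26 : 2*(y2+y6) = t ∨ 2*(y2+y6) = t-2) (c34 : 2*(y3+y4) = t ∨ 2*(y3+y4) = t-2) (c35 : 2*(y3+y5) = t ∨ 2*(y3+y5) = t-2) (c36 : 2*(y3+y6) = t ∨ 2*(y3+y6) = t-2) (c45 : 2*(y4+y5) = t ∨ 2*(y4+y5) = t-2) (c46 : 2*(y4+y6) = t ∨ 2*(y4+y6) = t-2) (c56 : 2*(y5+y6) = t ∨ 2*(y5+y6) = t-2) :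
    ∃ a b : ℝ, (y0 = b ∨ y1 = b ∨ y2 = b ∨ y3 = b ∨ y4 = b ∨ y5 = b ∨ y6 = b) ∧
      y0+y1+y2+y3+y4+y5+y6 = 6*a+b ∧
      y0^2+y1^2+y2^2+y3^2+y4^2+y5^2+y6^2 = 6*a^2+b^2 ∧
      (2*(a+a) = t ∨ 2*(a+a) = t-2) ∧ (2*(a+b) = t ∨ 2*(a+b) = t-2) := by
  rcases tripleEq t y0 y1 y2 c01 c02 c12 with heq | heq | heq
  · have haa := c01
    rw [← heq] at haa
    by_cases H2 : y2 = y0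
    · -- y2 = a
      by_cases H3 : y3 = y0
      · -- y3 = a
        by_cases H4 : y4 = y0
        · -- y4 = a
          by_cases H5 : y5 = y0
          · -- y5 = a
            exact ⟨y0, y6, (Or.inr (Or.inr (Or.inr (Or.inr (Or.inr (Or.inr rfl)))))), by rw [← heq, H2, H3, H4, H5]; ring, by rw [← heq, H2, H3, H4, H5]; ring, haa, c06⟩
          · -- y5 exceptional
            have H6 : y6 = y0 := (Lne t y0 y5 y6 haa c05 c06 c56).resolve_left H5
            exact ⟨y0, y5, (Or.inr (Or.inr (Or.inr (Or.inr (Or.inr (Or.inl rfl)))))), by rw [← heq, H2, H3, H4, H6]; ring, by rw [← heq, H2, H3, H4, H6]; ring, haa, c05⟩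
        · -- y4 exceptional
          have H5 : y5 = y0 := (Lne t y0 y4 y5 haa c04 c05 c45).resolve_left H4
          have H6 : y6 = y0 := (Lne t y0 y4 y6 haa c04 c06 c46).resolve_left H4
          exact ⟨y0, y4, (Or.inr (Or.inr (Or.inr (Or.inr (Or.inl rfl))))), by rw [← heq, H2, H3, H5, H6]; ring, by rw [← heq, H2, H3, H5, H6]; ring, haa, c04⟩
      · -- y3 exceptional
        have H4 : y4 = y0 := (Lne t y0 y3 y4 haa c03 c04 c34).resolve_left H3
        have H5 : y5 = y0 := (Lne t y0 y3 y5 haa c03 c05 c35).resolve_left H3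
        have H6 : y6 = y0 := (Lne t y0 y3 y6 haa c03 c06 c36).resolve_left H3
        exact ⟨y0, y3, (Or.inr (Or.inr (Or.inr (Or.inl rfl)))), by rw [← heq, H2, H4, H5, H6]; ring, by rw [← heq, H2, H4, H5, H6]; ring, haa, c03⟩
    · -- y2 exceptional
      have H3 : y3 = y0 := (Lne t y0 y2 y3 haa c02 c03 c23).resolve_left H2
      have H4 : y4 = y0 := (Lne t y0 y2 y4 haa c02 c04 c24).resolve_left H2
      have H5 : y5 = y0 := (Lne t y0 y2 y5 haa c02 c05 c25).resolve_left H2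
      have H6 : y6 = y0 := (Lne t y0 y2 y6 haa c02 c06 c26).resolve_left H2
      exact ⟨y0, y2, (Or.inr (Or.inr (Or.inl rfl))), by rw [← heq, H3, H4, H5, H6]; ring, by rw [← heq, H3, H4, H5, H6]; ring, haa, c02⟩
  · have haa := c02
    rw [← heq] at haa
    by_cases H1 : y1 = y0
    · -- y1 = a
      by_cases H3 : y3 = y0
      · -- y3 = a
        by_cases H4 : y4 = y0
        · -- y4 = a
          by_cases H5 : y5 = y0
          · -- y5 = a
            exact ⟨y0, y6, (Or.inr (Or.inr (Or.inr (Or.inr (Or.inr (Or.inr rfl)))))), by rw [← heq, H1, H3, H4, H5]; ring, by rw [← heq, H1, H3, H4, H5]; ring, haa, c06⟩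
          · -- y5 exceptional
            have H6 : y6 = y0 := (Lne t y0 y5 y6 haa c05 c06 c56).resolve_left H5
            exact ⟨y0, y5, (Or.inr (Or.inr (Or.inr (Or.inr (Or.inr (Or.inl rfl)))))), by rw [← heq, H1, H3, H4, H6]; ring, by rw [← heq, H1, H3, H4, H6]; ring, haa, c05⟩
        · -- y4 exceptional
          have H5 : y5 = y0 := (Lne t y0 y4 y5 haa c04 c05 c45).resolve_left H4
          have H6 : y6 = y0 := (Lne t y0 y4 y6 haa c04 c06 c46).resolve_left H4
          exact ⟨y0, y4, (Or.inr (Or.inr (Or.inr (Or.inr (Or.inl rfl))))), by rw [← heq, H1, H3, H5, H6]; ring, by rw [← heq, H1, H3, H5, H6]; ring, haa, c04⟩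
      · -- y3 exceptional
        have H4 : y4 = y0 := (Lne t y0 y3 y4 haa c03 c04 c34).resolve_left H3
        have H5 : y5 = y0 := (Lne t y0 y3 y5 haa c03 c05 c35).resolve_left H3
        have H6 : y6 = y0 := (Lne t y0 y3 y6 haa c03 c06 c36).resolve_left H3
        exact ⟨y0, y3, (Or.inr (Or.inr (Or.inr (Or.inl rfl)))), by rw [← heq, H1, H4, H5, H6]; ring, by rw [← heq, H1, H4, H5, H6]; ring, haa, c03⟩
    · -- y1 exceptional
      have H3 : y3 = y0 := (Lne t y0 y1 y3 haa c01 c03 c13).resolve_left H1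
      have H4 : y4 = y0 := (Lne t y0 y1 y4 haa c01 c04 c14).resolve_left H1
      have H5 : y5 = y0 := (Lne t y0 y1 y5 haa c01 c05 c15).resolve_left H1
      have H6 : y6 = y0 := (Lne t y0 y1 y6 haa c01 c06 c16).resolve_left H1
      exact ⟨y0, y1, (Or.inr (Or.inl rfl)), by rw [← heq, H3, H4, H5, H6]; ring, by rw [← heq, H3, H4, H5, H6]; ring, haa, c01⟩
  · have haa := c12
    rw [← heq] at haa
    by_cases H0 : y0 = y1
    · -- y0 = a
      by_cases H3 : y3 = y1
      · -- y3 = a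
        by_cases H4 : y4 = y1
        · -- y4 = a
          by_cases H5 : y5 = y1
          · -- y5 = a
            exact ⟨y1, y6, (Or.inr (Or.inr (Or.inr (Or.inr (Or.inr (Or.inr rfl)))))), by rw [← heq, H0, H3, H4, H5]; ring, by rw [← heq, H0, H3, H4, H5]; ring, haa, c16⟩
          · -- y5 exceptional
            have H6 : y6 = y1 := (Lne t y1 y5 y6 haa c15 c16 c56).resolve_left H5
            exact ⟨y1, y5, (Or.inr (Or.inr (Or.inr (Or.inr (Or.inr (Or.inl rfl)))))), by rw [← heq, H0, H3, H4, H6]; ring, by rw [← heq, H0, H3, H4, H6]; ring, haa, c15⟩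
        · -- y4 exceptional
          have H5 : y5 = y1 := (Lne t y1 y4 y5 haa c14 c15 c45).resolve_left H4
          have H6 : y6 = y1 := (Lne t y1 y4 y6 haa c14 c16 c46).resolve_left H4
          exact ⟨y1, y4, (Or.inr (Or.inr (Or.inr (Or.inr (Or.inl rfl))))), by rw [← heq, H0, H3, H5, H6]; ring, by rw [← heq, H0, H3, H5, H6]; ring, haa, c14⟩
      · -- y3 exceptional
        have H4 : y4 = y1 := (Lne t y1 y3 y4 haa c13 c14 c34).resolve_left H3
        have H5 : y5 = y1 := (Lne t y1 y3 y5 haa c13 c15 c35).resolve_left H3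
        have H6 : y6 = y1 := (Lne t y1 y3 y6 haa c13 c16 c36).resolve_left H3
        exact ⟨y1, y3, (Or.inr (Or.inr (Or.inr (Or.inl rfl)))), by rw [← heq, H0, H4, H5, H6]; ring, by rw [← heq, H0, H4, H5, H6]; ring, haa, c13⟩
    · -- y0 exceptional
      have H3 : y3 = y1 := (Lne t y1 y0 y3 haa (swC c01) c13 c03).resolve_left H0
      have H4 : y4 = y1 := (Lne t y1 y0 y4 haa (swC c01) c14 c04).resolve_left H0
      have H5 : y5 = y1 := (Lne t y1 y0 y5 haa (swC c01) c15 c05).resolve_left H0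
      have H6 : y6 = y1 := (Lne t y1 y0 y6 haa (swC c01) c16 c06).resolve_left H0
      exact ⟨y1, y0, (Or.inl rfl), by rw [← heq, H3, H4, H5, H6]; ring, by rw [← heq, H3, H4, H5, H6]; ring, haa, (swC c01)⟩

lemma sum_of_dist {y p : EuclideanSpace ℝ (Fin 8)} (h : dist y p = Real.sqrt 2 ∨ dist y p = 2) :
    (∑ m, (y m - p m)^2 = 2 ∨ ∑ m, (y m - p m)^2 = 4) := by
  have hnn : 0 ≤ ∑ m, (y m - p m)^2 := Finset.sum_nonneg (fun m _ => sq_nonneg _)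
  have hs : ∑ m, (y m - p m)^2 = (dist y p)^2 := by rw [dist_sq, Real.sq_sqrt hnn]
  rcases h with h | h
  · left; rw [hs, h, Real.sq_sqrt (by norm_num : (0:ℝ) ≤ 2)]
  · right; rw [hs, h]; norm_num

set_option maxHeartbeats 3000000 in
theorem maximal_two_distance_R8 :
    (JohnsonRep' 8 ∪ V0eight ∪ Weight).ncard = 29 ∧
    (JohnsonRep' 8 ∪ V0eight ∪ Weight) ⊆ Hyp2 8 ∧
    IsSDistanceSet 2 (JohnsonRep' 8 ∪ V0eight ∪ Weight) ∧
    distSet (JohnsonRep' 8 ∪ V0eight ∪ Weight) = {Real.sqrt 2, 2} ∧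
    (¬∃ y ∈ Hyp2 8 \ (JohnsonRep' 8 ∪ V0eight ∪ Weight),
      IsSDistanceSet 2 (JohnsonRep' 8 ∪ V0eight ∪ Weight ∪ {y})) := by
  refine ⟨card_S, S_subset_Hyp, isSDS, dS_eq, ?_⟩
  rintro ⟨y, ⟨hyH, hyS⟩, hfin, hcard⟩
  have hsub : distSet (JohnsonRep' 8 ∪ V0eight ∪ Weight) ⊆
      distSet (JohnsonRep' 8 ∪ V0eight ∪ Weight ∪ {y}) := by
    rintro d ⟨x1, hx1, x2, hx2, hne, rfl⟩
    exact ⟨x1, Or.inl hx1, x2, Or.inl hx2, hne, rfl⟩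
  have hDeq : ({Real.sqrt 2, 2} : Set ℝ) =
      distSet (JohnsonRep' 8 ∪ V0eight ∪ Weight ∪ {y}) := by
    apply Set.eq_of_subset_of_ncard_le
    · rw [← dS_eq]; exact hsub
    · rw [hcard, Set.ncard_pair sqrt2_ne_two]
    · exact hfin
  have key : ∀ a : I29, (∑ m, (y m - ptR a m)^2 = 2 ∨ ∑ m, (y m - ptR a m)^2 = 4) := by
    intro a
    have hyne : y ≠ ptR a := by
      intro h
      exact hyS (by rw [hS_eq]; exact ⟨a, h.symm⟩)
    have hmem : dist y (ptR a) ∈ distSet (JohnsonRep' 8 ∪ V0eight ∪ Weight ∪ {y}) :=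
      ⟨y, Or.inr rfl, ptR a, Or.inl (by rw [hS_eq]; exact Set.mem_range_self a), hyne, rfl⟩
    rw [← hDeq] at hmem
    apply sum_of_dist
    simpa using hmem
  have hsum : y 0 + y 1 + y 2 + y 3 + y 4 + y 5 + y 6 + y 7 = 2 := by
    have h := hyH
    rw [Hyp2, Set.mem_setOf_eq, Fin.sum_univ_eight] at h
    exact h
  set T : ℝ := (y 0)^2 + (y 1)^2 + (y 2)^2 + (y 3)^2 + (y 4)^2 + (y 5)^2 + (y 6)^2 + (y 7)^2 with hT
  have c01 : 2*(y 0 + y 1) = T ∨ 2*(y 0 + y 1) = T - 2 := by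
    have h := key (Sum.inl ⟨((0:Fin 7),(1:Fin 7)), by decide⟩)
    rw [Fin.sum_univ_eight] at h
    simp only [ptR_apply, ptZ] at h
    norm_num [Fin.ext_iff, Fin.val_zero, Fin.val_one, show ((2:Fin 8):ℕ)=2 from rfl, show ((3:Fin 8):ℕ)=3 from rfl, show ((4:Fin 8):ℕ)=4 from rfl, show ((5:Fin 8):ℕ)=5 from rfl, show ((6:Fin 8):ℕ)=6 from rfl, show ((7:Fin 8):ℕ)=7 from rfl, show ((2:Fin 7):ℕ)=2 from rfl, show ((3:Fin 7):ℕ)=3 from rfl, show ((4:Fin 7):ℕ)=4 from rfl, show ((5:Fin 7):ℕ)=5 from rfl, show ((6:Fin 7):ℕ)=6 from rfl, Fin.coe_castSucc] at h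
    ring_nf at h
    rcases h with h | h
    · left; linarith
    · right; linarith
  have c02 : 2*(y 0 + y 2) = T ∨ 2*(y 0 + y 2) = T - 2 := by
    have h := key (Sum.inl ⟨((0:Fin 7),(2:Fin 7)), by decide⟩)
    rw [Fin.sum_univ_eight] at h
    simp only [ptR_apply, ptZ] at h
    norm_num [Fin.ext_iff, Fin.val_zero, Fin.val_one, show ((2:Fin 8):ℕ)=2 from rfl, show ((3:Fin 8):ℕ)=3 from rfl, show ((4:Fin 8):ℕ)=4 from rfl, show ((5:Fin 8):ℕ)=5 from rfl, show ((6:Fin 8):ℕ)=6 from rfl, show ((7:Fin 8):ℕ)=7 from rfl, show ((2:Fin 7):ℕ)=2 from rfl, show ((3:Fin 7):ℕ)=3 from rfl, show ((4:Fin 7):ℕ)=4 from rfl, show ((5:Fin 7):ℕ)=5 from rfl, show ((6:Fin 7):ℕ)=6 from rfl, Fin.coe_castSucc] at h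
    ring_nf at h
    rcases h with h | h
    · left; linarith
    · right; linarith
  have c03 : 2*(y 0 + y 3) = T ∨ 2*(y 0 + y 3) = T - 2 := by
    have h := key (Sum.inl ⟨((0:Fin 7),(3:Fin 7)), by decide⟩)
    rw [Fin.sum_univ_eight] at h
    simp only [ptR_apply, ptZ] at h
    norm_num [Fin.ext_iff, Fin.val_zero, Fin.val_one, show ((2:Fin 8):ℕ)=2 from rfl, show ((3:Fin 8):ℕ)=3 from rfl, show ((4:Fin 8):ℕ)=4 from rfl, show ((5:Fin 8):ℕ)=5 from rfl, show ((6:Fin 8):ℕ)=6 from rfl, show ((7:Fin 8):ℕ)=7 from rfl, show ((2:Fin 7):ℕ)=2 from rfl, show ((3:Fin 7):ℕ)=3 from rfl, show ((4:Fin 7):ℕ)=4 from rfl, show ((5:Fin 7):ℕ)=5 from rfl, show ((6:Fin 7):ℕ)=6 from rfl, Fin.coe_castSucc] at h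
    ring_nf at h
    rcases h with h | h
    · left; linarith
    · right; linarith
  have c04 : 2*(y 0 + y 4) = T ∨ 2*(y 0 + y 4) = T - 2 := by
    have h := key (Sum.inl ⟨((0:Fin 7),(4:Fin 7)), by decide⟩)
    rw [Fin.sum_univ_eight] at h
    simp only [ptR_apply, ptZ] at h
    norm_num [Fin.ext_iff, Fin.val_zero, Fin.val_one, show ((2:Fin 8):ℕ)=2 from rfl, show ((3:Fin 8):ℕ)=3 from rfl, show ((4:Fin 8):ℕ)=4 from rfl, show ((5:Fin 8):ℕ)=5 from rfl, show ((6:Fin 8):ℕ)=6 from rfl, show ((7:Fin 8):ℕ)=7 from rfl, show ((2:Fin 7):ℕ)=2 from rfl, show ((3:Fin 7):ℕ)=3 from rfl, show ((4:Fin 7):ℕ)=4 from rfl, show ((5:Fin 7):ℕ)=5 from rfl, show ((6:Fin 7):ℕ)=6 from rfl, Fin.coe_castSucc] at h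
    ring_nf at h
    rcases h with h | h
    · left; linarith
    · right; linarith
  have c05 : 2*(y 0 + y 5) = T ∨ 2*(y 0 + y 5) = T - 2 := by
    have h := key (Sum.inl ⟨((0:Fin 7),(5:Fin 7)), by decide⟩)
    rw [Fin.sum_univ_eight] at h
    simp only [ptR_apply, ptZ] at h
    norm_num [Fin.ext_iff, Fin.val_zero, Fin.val_one, show ((2:Fin 8):ℕ)=2 from rfl, show ((3:Fin 8):ℕ)=3 from rfl, show ((4:Fin 8):ℕ)=4 from rfl, show ((5:Fin 8):ℕ)=5 from rfl, show ((6:Fin 8):ℕ)=6 from rfl, show ((7:Fin 8):ℕ)=7 from rfl, show ((2:Fin 7):ℕ)=2 from rfl, show ((3:Fin 7):ℕ)=3 from rfl, show ((4:Fin 7):ℕ)=4 from rfl, show ((5:Fin 7):ℕ)=5 from rfl, show ((6:Fin 7):ℕ)=6 from rfl, Fin.coe_castSucc] at h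
    ring_nf at h
    rcases h with h | h
    · left; linarith
    · right; linarith
  have c06 : 2*(y 0 + y 6) = T ∨ 2*(y 0 + y 6) = T - 2 := by
    have h := key (Sum.inl ⟨((0:Fin 7),(6:Fin 7)), by decide⟩)
    rw [Fin.sum_univ_eight] at h
    simp only [ptR_apply, ptZ] at h
    norm_num [Fin.ext_iff, Fin.val_zero, Fin.val_one, show ((2:Fin 8):ℕ)=2 from rfl, show ((3:Fin 8):ℕ)=3 from rfl, show ((4:Fin 8):ℕ)=4 from rfl, show ((5:Fin 8):ℕ)=5 from rfl, show ((6:Fin 8):ℕ)=6 from rfl, show ((7:Fin 8):ℕ)=7 from rfl, show ((2:Fin 7):ℕ)=2 from rfl, show ((3:Fin 7):ℕ)=3 from rfl, show ((4:Fin 7):ℕ)=4 from rfl, show ((5:Fin 7):ℕ)=5 from rfl, show ((6:Fin 7):ℕ)=6 from rfl, Fin.coe_castSucc] at h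
    ring_nf at h
    rcases h with h | h
    · left; linarith
    · right; linarith
  have c12 : 2*(y 1 + y 2) = T ∨ 2*(y 1 + y 2) = T - 2 := by
    have h := key (Sum.inl ⟨((1:Fin 7),(2:Fin 7)), by decide⟩)
    rw [Fin.sum_univ_eight] at h
    simp only [ptR_apply, ptZ] at h
    norm_num [Fin.ext_iff, Fin.val_zero, Fin.val_one, show ((2:Fin 8):ℕ)=2 from rfl, show ((3:Fin 8):ℕ)=3 from rfl, show ((4:Fin 8):ℕ)=4 from rfl, show ((5:Fin 8):ℕ)=5 from rfl, show ((6:Fin 8):ℕ)=6 from rfl, show ((7:Fin 8):ℕ)=7 from rfl, show ((2:Fin 7):ℕ)=2 from rfl, show ((3:Fin 7):ℕ)=3 from rfl, show ((4:Fin 7):ℕ)=4 from rfl, show ((5:Fin 7):ℕ)=5 from rfl, show ((6:Fin 7):ℕ)=6 from rfl, Fin.coe_castSucc] at h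
    ring_nf at h
    rcases h with h | h
    · left; linarith
    · right; linarith
  have c13 : 2*(y 1 + y 3) = T ∨ 2*(y 1 + y 3) = T - 2 := by
    have h := key (Sum.inl ⟨((1:Fin 7),(3:Fin 7)), by decide⟩)
    rw [Fin.sum_univ_eight] at h
    simp only [ptR_apply, ptZ] at h
    norm_num [Fin.ext_iff, Fin.val_zero, Fin.val_one, show ((2:Fin 8):ℕ)=2 from rfl, show ((3:Fin 8):ℕ)=3 from rfl, show ((4:Fin 8):ℕ)=4 from rfl, show ((5:Fin 8):ℕ)=5 from rfl, show ((6:Fin 8):ℕ)=6 from rfl, show ((7:Fin 8):ℕ)=7 from rfl, show ((2:Fin 7):ℕ)=2 from rfl, show ((3:Fin 7):ℕ)=3 from rfl, show ((4:Fin 7):ℕ)=4 from rfl, show ((5:Fin 7):ℕ)=5 from rfl, show ((6:Fin 7):ℕ)=6 from rfl, Fin.coe_castSucc] at h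
    ring_nf at h
    rcases h with h | h
    · left; linarith
    · right; linarith
  have c14 : 2*(y 1 + y 4) = T ∨ 2*(y 1 + y 4) = T - 2 := by
    have h := key (Sum.inl ⟨((1:Fin 7),(4:Fin 7)), by decide⟩)
    rw [Fin.sum_univ_eight] at h
    simp only [ptR_apply, ptZ] at h
    norm_num [Fin.ext_iff, Fin.val_zero, Fin.val_one, show ((2:Fin 8):ℕ)=2 from rfl, show ((3:Fin 8):ℕ)=3 from rfl, show ((4:Fin 8):ℕ)=4 from rfl, show ((5:Fin 8):ℕ)=5 from rfl, show ((6:Fin 8):ℕ)=6 from rfl, show ((7:Fin 8):ℕ)=7 from rfl, show ((2:Fin 7):ℕ)=2 from rfl, show ((3:Fin 7):ℕ)=3 from rfl, show ((4:Fin 7):ℕ)=4 from rfl, show ((5:Fin 7):ℕ)=5 from rfl, show ((6:Fin 7):ℕ)=6 from rfl, Fin.coe_castSucc] at h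
    ring_nf at h
    rcases h with h | h
    · left; linarith
    · right; linarith
  have c15 : 2*(y 1 + y 5) = T ∨ 2*(y 1 + y 5) = T - 2 := by
    have h := key (Sum.inl ⟨((1:Fin 7),(5:Fin 7)), by decide⟩)
    rw [Fin.sum_univ_eight] at h
    simp only [ptR_apply, ptZ] at h
    norm_num [Fin.ext_iff, Fin.val_zero, Fin.val_one, show ((2:Fin 8):ℕ)=2 from rfl, show ((3:Fin 8):ℕ)=3 from rfl, show ((4:Fin 8):ℕ)=4 from rfl, show ((5:Fin 8):ℕ)=5 from rfl, show ((6:Fin 8):ℕ)=6 from rfl, show ((7:Fin 8):ℕ)=7 from rfl, show ((2:Fin 7):ℕ)=2 from rfl, show ((3:Fin 7):ℕ)=3 from rfl, show ((4:Fin 7):ℕ)=4 from rfl, show ((5:Fin 7):ℕ)=5 from rfl, show ((6:Fin 7):ℕ)=6 from rfl, Fin.coe_castSucc] at h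
    ring_nf at h
    rcases h with h | h
    · left; linarith
    · right; linarith
  have c16 : 2*(y 1 + y 6) = T ∨ 2*(y 1 + y 6) = T - 2 := by
    have h := key (Sum.inl ⟨((1:Fin 7),(6:Fin 7)), by decide⟩)
    rw [Fin.sum_univ_eight] at h
    simp only [ptR_apply, ptZ] at h
    norm_num [Fin.ext_iff, Fin.val_zero, Fin.val_one, show ((2:Fin 8):ℕ)=2 from rfl, show ((3:Fin 8):ℕ)=3 from rfl, show ((4:Fin 8):ℕ)=4 from rfl, show ((5:Fin 8):ℕ)=5 from rfl, show ((6:Fin 8):ℕ)=6 from rfl, show ((7:Fin 8):ℕ)=7 from rfl, show ((2:Fin 7):ℕ)=2 from rfl, show ((3:Fin 7):ℕ)=3 from rfl, show ((4:Fin 7):ℕ)=4 from rfl, show ((5:Fin 7):ℕ)=5 from rfl, show ((6:Fin 7):ℕ)=6 from rfl, Fin.coe_castSucc] at h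
    ring_nf at h
    rcases h with h | h
    · left; linarith
    · right; linarith
  have c23 : 2*(y 2 + y 3) = T ∨ 2*(y 2 + y 3) = T - 2 := by
    have h := key (Sum.inl ⟨((2:Fin 7),(3:Fin 7)), by decide⟩)
    rw [Fin.sum_univ_eight] at h
    simp only [ptR_apply, ptZ] at h
    norm_num [Fin.ext_iff, Fin.val_zero, Fin.val_one, show ((2:Fin 8):ℕ)=2 from rfl, show ((3:Fin 8):ℕ)=3 from rfl, show ((4:Fin 8):ℕ)=4 from rfl, show ((5:Fin 8):ℕ)=5 from rfl, show ((6:Fin 8):ℕ)=6 from rfl, show ((7:Fin 8):ℕ)=7 from rfl, show ((2:Fin 7):ℕ)=2 from rfl, show ((3:Fin 7):ℕ)=3 from rfl, show ((4:Fin 7):ℕ)=4 from rfl, show ((5:Fin 7):ℕ)=5 from rfl, show ((6:Fin 7):ℕ)=6 from rfl, Fin.coe_castSucc] at h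
    ring_nf at h
    rcases h with h | h
    · left; linarith
    · right; linarith
  have c24 : 2*(y 2 + y 4) = T ∨ 2*(y 2 + y 4) = T - 2 := by
    have h := key (Sum.inl ⟨((2:Fin 7),(4:Fin 7)), by decide⟩)
    rw [Fin.sum_univ_eight] at h
    simp only [ptR_apply, ptZ] at h
    norm_num [Fin.ext_iff, Fin.val_zero, Fin.val_one, show ((2:Fin 8):ℕ)=2 from rfl, show ((3:Fin 8):ℕ)=3 from rfl, show ((4:Fin 8):ℕ)=4 from rfl, show ((5:Fin 8):ℕ)=5 from rfl, show ((6:Fin 8):ℕ)=6 from rfl, show ((7:Fin 8):ℕ)=7 from rfl, show ((2:Fin 7):ℕ)=2 from rfl, show ((3:Fin 7):ℕ)=3 from rfl, show ((4:Fin 7):ℕ)=4 from rfl, show ((5:Fin 7):ℕ)=5 from rfl, show ((6:Fin 7):ℕ)=6 from rfl, Fin.coe_castSucc] at h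
    ring_nf at h
    rcases h with h | h
    · left; linarith
    · right; linarith
  have c25 : 2*(y 2 + y 5) = T ∨ 2*(y 2 + y 5) = T - 2 := by
    have h := key (Sum.inl ⟨((2:Fin 7),(5:Fin 7)), by decide⟩)
    rw [Fin.sum_univ_eight] at h
    simp only [ptR_apply, ptZ] at h
    norm_num [Fin.ext_iff, Fin.val_zero, Fin.val_one, show ((2:Fin 8):ℕ)=2 from rfl, show ((3:Fin 8):ℕ)=3 from rfl, show ((4:Fin 8):ℕ)=4 from rfl, show ((5:Fin 8):ℕ)=5 from rfl, show ((6:Fin 8):ℕ)=6 from rfl, show ((7:Fin 8):ℕ)=7 from rfl, show ((2:Fin 7):ℕ)=2 from rfl, show ((3:Fin 7):ℕ)=3 from rfl, show ((4:Fin 7):ℕ)=4 from rfl, show ((5:Fin 7):ℕ)=5 from rfl, show ((6:Fin 7):ℕ)=6 from rfl, Fin.coe_castSucc] at h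
    ring_nf at h
    rcases h with h | h
    · left; linarith
    · right; linarith
  have c26 : 2*(y 2 + y 6) = T ∨ 2*(y 2 + y 6) = T - 2 := by
    have h := key (Sum.inl ⟨((2:Fin 7),(6:Fin 7)), by decide⟩)
    rw [Fin.sum_univ_eight] at h
    simp only [ptR_apply, ptZ] at h
    norm_num [Fin.ext_iff, Fin.val_zero, Fin.val_one, show ((2:Fin 8):ℕ)=2 from rfl, show ((3:Fin 8):ℕ)=3 from rfl, show ((4:Fin 8):ℕ)=4 from rfl, show ((5:Fin 8):ℕ)=5 from rfl, show ((6:Fin 8):ℕ)=6 from rfl, show ((7:Fin 8):ℕ)=7 from rfl, show ((2:Fin 7):ℕ)=2 from rfl, show ((3:Fin 7):ℕ)=3 from rfl, show ((4:Fin 7):ℕ)=4 from rfl, show ((5:Fin 7):ℕ)=5 from rfl, show ((6:Fin 7):ℕ)=6 from rfl, Fin.coe_castSucc] at h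
    ring_nf at h
    rcases h with h | h
    · left; linarith
    · right; linarith
  have c34 : 2*(y 3 + y 4) = T ∨ 2*(y 3 + y 4) = T - 2 := by
    have h := key (Sum.inl ⟨((3:Fin 7),(4:Fin 7)), by decide⟩)
    rw [Fin.sum_univ_eight] at h
    simp only [ptR_apply, ptZ] at h
    norm_num [Fin.ext_iff, Fin.val_zero, Fin.val_one, show ((2:Fin 8):ℕ)=2 from rfl, show ((3:Fin 8):ℕ)=3 from rfl, show ((4:Fin 8):ℕ)=4 from rfl, show ((5:Fin 8):ℕ)=5 from rfl, show ((6:Fin 8):ℕ)=6 from rfl, show ((7:Fin 8):ℕ)=7 from rfl, show ((2:Fin 7):ℕ)=2 from rfl, show ((3:Fin 7):ℕ)=3 from rfl, show ((4:Fin 7):ℕ)=4 from rfl, show ((5:Fin 7):ℕ)=5 from rfl, show ((6:Fin 7):ℕ)=6 from rfl, Fin.coe_castSucc] at h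
    ring_nf at h
    rcases h with h | h
    · left; linarith
    · right; linarith
  have c35 : 2*(y 3 + y 5) = T ∨ 2*(y 3 + y 5) = T - 2 := by
    have h := key (Sum.inl ⟨((3:Fin 7),(5:Fin 7)), by decide⟩)
    rw [Fin.sum_univ_eight] at h
    simp only [ptR_apply, ptZ] at h
    norm_num [Fin.ext_iff, Fin.val_zero, Fin.val_one, show ((2:Fin 8):ℕ)=2 from rfl, show ((3:Fin 8):ℕ)=3 from rfl, show ((4:Fin 8):ℕ)=4 from rfl, show ((5:Fin 8):ℕ)=5 from rfl, show ((6:Fin 8):ℕ)=6 from rfl, show ((7:Fin 8):ℕ)=7 from rfl, show ((2:Fin 7):ℕ)=2 from rfl, show ((3:Fin 7):ℕ)=3 from rfl, show ((4:Fin 7):ℕ)=4 from rfl, show ((5:Fin 7):ℕ)=5 from rfl, show ((6:Fin 7):ℕ)=6 from rfl, Fin.coe_castSucc] at h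
    ring_nf at h
    rcases h with h | h
    · left; linarith
    · right; linarith
  have c36 : 2*(y 3 + y 6) = T ∨ 2*(y 3 + y 6) = T - 2 := by
    have h := key (Sum.inl ⟨((3:Fin 7),(6:Fin 7)), by decide⟩)
    rw [Fin.sum_univ_eight] at h
    simp only [ptR_apply, ptZ] at h
    norm_num [Fin.ext_iff, Fin.val_zero, Fin.val_one, show ((2:Fin 8):ℕ)=2 from rfl, show ((3:Fin 8):ℕ)=3 from rfl, show ((4:Fin 8):ℕ)=4 from rfl, show ((5:Fin 8):ℕ)=5 from rfl, show ((6:Fin 8):ℕ)=6 from rfl, show ((7:Fin 8):ℕ)=7 from rfl, show ((2:Fin 7):ℕ)=2 from rfl, show ((3:Fin 7):ℕ)=3 from rfl, show ((4:Fin 7):ℕ)=4 from rfl, show ((5:Fin 7):ℕ)=5 from rfl, show ((6:Fin 7):ℕ)=6 from rfl, Fin.coe_castSucc] at h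
    ring_nf at h
    rcases h with h | h
    · left; linarith
    · right; linarith
  have c45 : 2*(y 4 + y 5) = T ∨ 2*(y 4 + y 5) = T - 2 := by
    have h := key (Sum.inl ⟨((4:Fin 7),(5:Fin 7)), by decide⟩)
    rw [Fin.sum_univ_eight] at h
    simp only [ptR_apply, ptZ] at h
    norm_num [Fin.ext_iff, Fin.val_zero, Fin.val_one, show ((2:Fin 8):ℕ)=2 from rfl, show ((3:Fin 8):ℕ)=3 from rfl, show ((4:Fin 8):ℕ)=4 from rfl, show ((5:Fin 8):ℕ)=5 from rfl, show ((6:Fin 8):ℕ)=6 from rfl, show ((7:Fin 8):ℕ)=7 from rfl, show ((2:Fin 7):ℕ)=2 from rfl, show ((3:Fin 7):ℕ)=3 from rfl, show ((4:Fin 7):ℕ)=4 from rfl, show ((5:Fin 7):ℕ)=5 from rfl, show ((6:Fin 7):ℕ)=6 from rfl, Fin.coe_castSucc] at h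
    ring_nf at h
    rcases h with h | h
    · left; linarith
    · right; linarith
  have c46 : 2*(y 4 + y 6) = T ∨ 2*(y 4 + y 6) = T - 2 := by
    have h := key (Sum.inl ⟨((4:Fin 7),(6:Fin 7)), by decide⟩)
    rw [Fin.sum_univ_eight] at h
    simp only [ptR_apply, ptZ] at h
    norm_num [Fin.ext_iff, Fin.val_zero, Fin.val_one, show ((2:Fin 8):ℕ)=2 from rfl, show ((3:Fin 8):ℕ)=3 from rfl, show ((4:Fin 8):ℕ)=4 from rfl, show ((5:Fin 8):ℕ)=5 from rfl, show ((6:Fin 8):ℕ)=6 from rfl, show ((7:Fin 8):ℕ)=7 from rfl, show ((2:Fin 7):ℕ)=2 from rfl, show ((3:Fin 7):ℕ)=3 from rfl, show ((4:Fin 7):ℕ)=4 from rfl, show ((5:Fin 7):ℕ)=5 from rfl, show ((6:Fin 7):ℕ)=6 from rfl, Fin.coe_castSucc] at h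
    ring_nf at h
    rcases h with h | h
    · left; linarith
    · right; linarith
  have c56 : 2*(y 5 + y 6) = T ∨ 2*(y 5 + y 6) = T - 2 := by
    have h := key (Sum.inl ⟨((5:Fin 7),(6:Fin 7)), by decide⟩)
    rw [Fin.sum_univ_eight] at h
    simp only [ptR_apply, ptZ] at h
    norm_num [Fin.ext_iff, Fin.val_zero, Fin.val_one, show ((2:Fin 8):ℕ)=2 from rfl, show ((3:Fin 8):ℕ)=3 from rfl, show ((4:Fin 8):ℕ)=4 from rfl, show ((5:Fin 8):ℕ)=5 from rfl, show ((6:Fin 8):ℕ)=6 from rfl, show ((7:Fin 8):ℕ)=7 from rfl, show ((2:Fin 7):ℕ)=2 from rfl, show ((3:Fin 7):ℕ)=3 from rfl, show ((4:Fin 7):ℕ)=4 from rfl, show ((5:Fin 7):ℕ)=5 from rfl, show ((6:Fin 7):ℕ)=6 from rfl, Fin.coe_castSucc] at h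
    ring_nf at h
    rcases h with h | h
    · left; linarith
    · right; linarith
  have hV : 4*(y 7) = -T ∨ 4*(y 7) = 2 - T := by
    have h := key (Sum.inr (Sum.inl ()))
    rw [Fin.sum_univ_eight] at h
    simp only [ptR_apply, ptZ] at h
    norm_num [Fin.ext_iff, Fin.val_zero, Fin.val_one, show ((2:Fin 8):ℕ)=2 from rfl, show ((3:Fin 8):ℕ)=3 from rfl, show ((4:Fin 8):ℕ)=4 from rfl, show ((5:Fin 8):ℕ)=5 from rfl, show ((6:Fin 8):ℕ)=6 from rfl, show ((7:Fin 8):ℕ)=7 from rfl, show ((2:Fin 7):ℕ)=2 from rfl, show ((3:Fin 7):ℕ)=3 from rfl, show ((4:Fin 7):ℕ)=4 from rfl, show ((5:Fin 7):ℕ)=5 from rfl, show ((6:Fin 7):ℕ)=6 from rfl, Fin.coe_castSucc] at h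
    ring_nf at h
    rcases h with h | h
    · left; linarith
    · right; linarith
  have hw0 : 2*(y 0 + y 7) = 2 - T ∨ 2*(y 0 + y 7) = 4 - T := by
    have h := key (Sum.inr (Sum.inr (0:Fin 7)))
    rw [Fin.sum_univ_eight] at h
    simp only [ptR_apply, ptZ] at h
    norm_num [Fin.ext_iff, Fin.val_zero, Fin.val_one, show ((2:Fin 8):ℕ)=2 from rfl, show ((3:Fin 8):ℕ)=3 from rfl, show ((4:Fin 8):ℕ)=4 from rfl, show ((5:Fin 8):ℕ)=5 from rfl, show ((6:Fin 8):ℕ)=6 from rfl, show ((7:Fin 8):ℕ)=7 from rfl, show ((2:Fin 7):ℕ)=2 from rfl, show ((3:Fin 7):ℕ)=3 from rfl, show ((4:Fin 7):ℕ)=4 from rfl, show ((5:Fin 7):ℕ)=5 from rfl, show ((6:Fin 7):ℕ)=6 from rfl, Fin.coe_castSucc] at h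
    ring_nf at h
    rcases h with h | h
    · left; linarith
    · right; linarith
  have hw1 : 2*(y 1 + y 7) = 2 - T ∨ 2*(y 1 + y 7) = 4 - T := by
    have h := key (Sum.inr (Sum.inr (1:Fin 7)))
    rw [Fin.sum_univ_eight] at h
    simp only [ptR_apply, ptZ] at h
    norm_num [Fin.ext_iff, Fin.val_zero, Fin.val_one, show ((2:Fin 8):ℕ)=2 from rfl, show ((3:Fin 8):ℕ)=3 from rfl, show ((4:Fin 8):ℕ)=4 from rfl, show ((5:Fin 8):ℕ)=5 from rfl, show ((6:Fin 8):ℕ)=6 from rfl, show ((7:Fin 8):ℕ)=7 from rfl, show ((2:Fin 7):ℕ)=2 from rfl, show ((3:Fin 7):ℕ)=3 from rfl, show ((4:Fin 7):ℕ)=4 from rfl, show ((5:Fin 7):ℕ)=5 from rfl, show ((6:Fin 7):ℕ)=6 from rfl, Fin.coe_castSucc] at h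
    ring_nf at h
    rcases h with h | h
    · left; linarith
    · right; linarith
  have hw2 : 2*(y 2 + y 7) = 2 - T ∨ 2*(y 2 + y 7) = 4 - T := by
    have h := key (Sum.inr (Sum.inr (2:Fin 7)))
    rw [Fin.sum_univ_eight] at h
    simp only [ptR_apply, ptZ] at h
    norm_num [Fin.ext_iff, Fin.val_zero, Fin.val_one, show ((2:Fin 8):ℕ)=2 from rfl, show ((3:Fin 8):ℕ)=3 from rfl, show ((4:Fin 8):ℕ)=4 from rfl, show ((5:Fin 8):ℕ)=5 from rfl, show ((6:Fin 8):ℕ)=6 from rfl, show ((7:Fin 8):ℕ)=7 from rfl, show ((2:Fin 7):ℕ)=2 from rfl, show ((3:Fin 7):ℕ)=3 from rfl, show ((4:Fin 7):ℕ)=4 from rfl, show ((5:Fin 7):ℕ)=5 from rfl, show ((6:Fin 7):ℕ)=6 from rfl, Fin.coe_castSucc] at h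
    ring_nf at h
    rcases h with h | h
    · left; linarith
    · right; linarith
  have hw3 : 2*(y 3 + y 7) = 2 - T ∨ 2*(y 3 + y 7) = 4 - T := by
    have h := key (Sum.inr (Sum.inr (3:Fin 7)))
    rw [Fin.sum_univ_eight] at h
    simp only [ptR_apply, ptZ] at h
    norm_num [Fin.ext_iff, Fin.val_zero, Fin.val_one, show ((2:Fin 8):ℕ)=2 from rfl, show ((3:Fin 8):ℕ)=3 from rfl, show ((4:Fin 8):ℕ)=4 from rfl, show ((5:Fin 8):ℕ)=5 from rfl, show ((6:Fin 8):ℕ)=6 from rfl, show ((7:Fin 8):ℕ)=7 from rfl, show ((2:Fin 7):ℕ)=2 from rfl, show ((3:Fin 7):ℕ)=3 from rfl, show ((4:Fin 7):ℕ)=4 from rfl, show ((5:Fin 7):ℕ)=5 from rfl, show ((6:Fin 7):ℕ)=6 from rfl, Fin.coe_castSucc] at h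
    ring_nf at h
    rcases h with h | h
    · left; linarith
    · right; linarith
  have hw4 : 2*(y 4 + y 7) = 2 - T ∨ 2*(y 4 + y 7) = 4 - T := by
    have h := key (Sum.inr (Sum.inr (4:Fin 7)))
    rw [Fin.sum_univ_eight] at h
    simp only [ptR_apply, ptZ] at h
    norm_num [Fin.ext_iff, Fin.val_zero, Fin.val_one, show ((2:Fin 8):ℕ)=2 from rfl, show ((3:Fin 8):ℕ)=3 from rfl, show ((4:Fin 8):ℕ)=4 from rfl, show ((5:Fin 8):ℕ)=5 from rfl, show ((6:Fin 8):ℕ)=6 from rfl, show ((7:Fin 8):ℕ)=7 from rfl, show ((2:Fin 7):ℕ)=2 from rfl, show ((3:Fin 7):ℕ)=3 from rfl, show ((4:Fin 7):ℕ)=4 from rfl, show ((5:Fin 7):ℕ)=5 from rfl, show ((6:Fin 7):ℕ)=6 from rfl, Fin.coe_castSucc] at h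
    ring_nf at h
    rcases h with h | h
    · left; linarith
    · right; linarith
  have hw5 : 2*(y 5 + y 7) = 2 - T ∨ 2*(y 5 + y 7) = 4 - T := by
    have h := key (Sum.inr (Sum.inr (5:Fin 7)))
    rw [Fin.sum_univ_eight] at h
    simp only [ptR_apply, ptZ] at h
    norm_num [Fin.ext_iff, Fin.val_zero, Fin.val_one, show ((2:Fin 8):ℕ)=2 from rfl, show ((3:Fin 8):ℕ)=3 from rfl, show ((4:Fin 8):ℕ)=4 from rfl, show ((5:Fin 8):ℕ)=5 from rfl, show ((6:Fin 8):ℕ)=6 from rfl, show ((7:Fin 8):ℕ)=7 from rfl, show ((2:Fin 7):ℕ)=2 from rfl, show ((3:Fin 7):ℕ)=3 from rfl, show ((4:Fin 7):ℕ)=4 from rfl, show ((5:Fin 7):ℕ)=5 from rfl, show ((6:Fin 7):ℕ)=6 from rfl, Fin.coe_castSucc] at h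
    ring_nf at h
    rcases h with h | h
    · left; linarith
    · right; linarith
  have hw6 : 2*(y 6 + y 7) = 2 - T ∨ 2*(y 6 + y 7) = 4 - T := by
    have h := key (Sum.inr (Sum.inr (6:Fin 7)))
    rw [Fin.sum_univ_eight] at h
    simp only [ptR_apply, ptZ] at h
    norm_num [Fin.ext_iff, Fin.val_zero, Fin.val_one, show ((2:Fin 8):ℕ)=2 from rfl, show ((3:Fin 8):ℕ)=3 from rfl, show ((4:Fin 8):ℕ)=4 from rfl, show ((5:Fin 8):ℕ)=5 from rfl, show ((6:Fin 8):ℕ)=6 from rfl, show ((7:Fin 8):ℕ)=7 from rfl, show ((2:Fin 7):ℕ)=2 from rfl, show ((3:Fin 7):ℕ)=3 from rfl, show ((4:Fin 7):ℕ)=4 from rfl, show ((5:Fin 7):ℕ)=5 from rfl, show ((6:Fin 7):ℕ)=6 from rfl, Fin.coe_castSucc] at h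
    ring_nf at h
    rcases h with h | h
    · left; linarith
    · right; linarith
  obtain ⟨A, B, hb, hsum7, hsq7, h3, h4⟩ :=
    structure7 T (y 0) (y 1) (y 2) (y 3) (y 4) (y 5) (y 6) c01 c02 c03 c04 c05 c06 c12 c13 c14 c15 c16 c23 c24 c25 c26 c34 c35 c36 c45 c46 c56
  have hsum8 : 6*A + B + y 7 = 2 := by linarith
  have ht2 : T = 6*A^2 + B^2 + (y 7)^2 := by rw [hT]; linarith
  have hWb : 2*(B + y 7) = 2 - T ∨ 2*(B + y 7) = 4 - T := by
    rcases hb with hb | hb | hb | hb | hb | hb | hb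
    · rw [hb] at hw0; exact hw0
    · rw [hb] at hw1; exact hw1
    · rw [hb] at hw2; exact hw2
    · rw [hb] at hw3; exact hw3
    · rw [hb] at hw4; exact hw4
    · rw [hb] at hw5; exact hw5
    · rw [hb] at hw6; exact hw6
  exact finalLemma T A B (y 7) hsum8 ht2 h3 h4 hV hWb
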